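/- Let z, S : Fin n → ℝ with Sᵢ > 0, and let A : ℝⁿ → Matrix (Fin n) (Fin n) ℝ satisfy A(h) = −A(h)ᵀ. Define Hᵢ = zᵢ + hᵢ and W(h) = ρg ∑ᵢ Sᵢ (zᵢhᵢ + hᵢ²/2) with ρg > 0. If h solves dhᵢ/dt = (∑ⱼ A(h)ᵢⱼ)/Sᵢ and for all i,j: A(h)ᵢⱼ ≤ 0 implies Hᵢ ≥ Hⱼ, then d/dt W(h(t)) ≤ 0. -/

import Mathlib

open Matrix

/-- Non-increase of total gravitational potential energy
`W(h) = ρg ∑ᵢ Sᵢ (zᵢhᵢ + hᵢ²/2)` along solutions, provided water only flows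
from higher (or equal) water level to lower: `A(h)ᵢⱼ ≤ 0 → Hᵢ ≥ Hⱼ`. -/
theorem stmt_2 {n : ℕ} (z S : Fin n → ℝ) (hS : ∀ i, 0 < S i)
    (A : (Fin n → ℝ) → Matrix (Fin n) (Fin n) ℝ)
    (hanti : ∀ h, A h = -(A h)ᵀ)
    (ρg : ℝ) (hρg : 0 < ρg)
    (h : ℝ → Fin n → ℝ)
    (hode : ∀ t i, HasDerivAt (fun s => h s i) ((∑ j, A (h t) i j) / S i) t)
    (hlevel : ∀ t i j, A (h t) i j ≤ 0 → z i + h t i ≥ z j + h t j) :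
    ∀ (t : ℝ) (w : ℝ),
      HasDerivAt (fun s => ρg * ∑ i, S i * (z i * h s i + (h s i) ^ 2 / 2)) w t →
      w ≤ 0 := by
  intro t w hw
  set M := A (h t) with hM
  set d : Fin n → ℝ := fun i => (∑ j, M i j) / S i with hd
  -- explicit derivative
  have hW : HasDerivAt (fun s => ρg * ∑ i, S i * (z i * h s i + (h s i) ^ 2 / 2))
      (ρg * ∑ i, S i * ((z i + h t i) * d i)) t := by
    apply HasDerivAt.const_mul
    apply HasDerivAt.fun_sum
    intro i _
    have h1 : HasDerivAt (fun s => z i * h s i + (h s i) ^ 2 / 2)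
        (z i * d i + (↑2 * h t i ^ 1 * d i) / 2) t := by
      exact ((hode t i).const_mul (z i)).add (((hode t i).pow 2).div_const 2)
    have : z i * d i + (↑2 * h t i ^ 1 * d i) / 2 = (z i + h t i) * d i := by
      ring
    rw [this] at h1
    exact h1.const_mul (S i)
  have hwq : w = ρg * ∑ i, S i * ((z i + h t i) * d i) := hw.unique hW
  -- simplify S i * (H i * (X / S i)) = H i * X
  have hsimp : ∀ i, S i * ((z i + h t i) * d i) = (z i + h t i) * ∑ j, M i j := by
    intro i
    have : S i ≠ 0 := (hS i).ne'
    simp only [hd]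
    field_simp
  rw [hwq]
  simp only [hsimp]
  set H : Fin n → ℝ := fun i => z i + h t i with hH
  have key : ∀ i j, (H i - H j) * M i j ≤ 0 := by
    intro i j
    rcases le_or_gt (M i j) 0 with hle | hlt
    · exact mul_nonpos_of_nonneg_of_nonpos (sub_nonneg.2 (hlevel t i j hle)) hle
    · have hji : M j i ≤ 0 := by
        have hc := congrFun (congrFun (hanti (h t)) j) i
        simp only [Matrix.neg_apply, Matrix.transpose_apply] at hc
        rw [← hM] at hc
        rw [hc]
        linarith
      exact mul_nonpos_of_nonpos_of_nonneg (sub_nonpos.2 (hlevel t j i hji)) hlt.le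
  have hswap : (∑ i, ∑ j, H j * M i j) = - ∑ i, ∑ j, H i * M i j := by
    rw [Finset.sum_comm, ← Finset.sum_neg_distrib]
    apply Finset.sum_congr rfl
    intro i _
    rw [← Finset.sum_neg_distrib]
    apply Finset.sum_congr rfl
    intro j _
    have hc := congrFun (congrFun (hanti (h t)) j) i
    simp only [Matrix.neg_apply, Matrix.transpose_apply] at hc
    rw [← hM] at hc
    rw [hc]; ring
  have hsplit : (∑ i, ∑ j, (H i - H j) * M i j)
      = (∑ i, ∑ j, H i * M i j) - (∑ i, ∑ j, H j * M i j) := by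
    simp [sub_mul, Finset.sum_sub_distrib]
  have hnonpos : (∑ i, ∑ j, (H i - H j) * M i j) ≤ 0 :=
    Finset.sum_nonpos fun i _ => Finset.sum_nonpos fun j _ => key i j
  have hT : (∑ i, ∑ j, H i * M i j) ≤ 0 := by
    rw [hsplit, hswap] at hnonpos; linarith
  have hfin : (∑ i, H i * ∑ j, M i j) = ∑ i, ∑ j, H i * M i j := by
    simp [Finset.mul_sum]
  rw [hfin]
  exact mul_nonpos_of_nonneg_of_nonpos hρg.le hT
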